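/- Let G be a bridgeless connected graph with a dominating set D of size at least 2 such that no two vertices of D are adjacent. Then there exists a subtree T of G with D ⊆ V(T) and |V(T)| ≤ 3|D| − 2, constructed by iteratively attaching shortest paths (each of length at most 3) from vertices of D to the current tree. -/

import Mathlib

open scoped Classical

/-- `H` is an orientation of the simple graph `G`: every edge gets exactly one direction. -/
structure IsOrientation {V : Type*} (G : SimpleGraph V) (H : V → V → Prop) : Prop where
  le_adj : ∀ u v, H u v → G.Adj u v
  total : ∀ u v, G.Adj u v → H u v ∨ H v u
  asymm : ∀ u v, H u v → ¬ H v u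

/-- A digraph (given by its arc relation) is strongly connected if every vertex is
reachable from every other by a directed path. -/
def StronglyConnected {V : Type*} (H : V → V → Prop) : Prop :=
  ∀ u v : V, Relation.ReflTransGen H u v

/-- Directed distance: length of a shortest directed walk from `u` to `v`. -/
noncomputable def ddist {V : Type*} (H : V → V → Prop) (u v : V) : ℕ :=
  sInf {n | ∃ f : ℕ → V, f 0 = u ∧ f n = v ∧ ∀ i < n, H (f i) (f (i + 1))}

/-- Diameter of a digraph on a finite vertex type. -/
noncomputable def ddiam {V : Type*} [Fintype V] (H : V → V → Prop) : ℕ :=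
  Finset.univ.sup fun p : V × V => ddist H p.1 p.2

/-- The minimum oriented diameter of a graph. -/
noncomputable def minOrientedDiam {V : Type*} [Fintype V] (G : SimpleGraph V) : ℕ :=
  sInf {d | ∃ H : V → V → Prop, IsOrientation G H ∧ StronglyConnected H ∧ ddiam H = d}

/-- A graph is bridgeless if no edge is a bridge. -/
def Bridgeless {V : Type*} (G : SimpleGraph V) : Prop :=
  ∀ e : Sym2 V, ¬ G.IsBridge e

/-- `D` is a dominating set of `G`. -/
def Dominating {V : Type*} (G : SimpleGraph V) (D : Set V) : Prop :=
  ∀ v ∉ D, ∃ u ∈ D, G.Adj u v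

/-- The domination number of a finite graph. -/
noncomputable def dominationNumber {V : Type*} [Fintype V] (G : SimpleGraph V) : ℕ :=
  sInf {n | ∃ D : Finset V, Dominating G ↑D ∧ D.card = n}


open SimpleGraph

private lemma reach_del {W : Type*} {G : SimpleGraph W} {v w : W}
    (hr : (G \ SimpleGraph.fromEdgeSet {s(v, w)}).Reachable v w) :
    ∀ {a b : W}, G.Reachable a b → (G \ SimpleGraph.fromEdgeSet {s(v, w)}).Reachable a b := by
  intro a b ⟨p⟩
  induction p with
  | nil => exact Reachable.refl _
  | @cons a c b h q ih =>
    refine Reachable.trans ?_ ih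
    by_cases hadj : (G \ SimpleGraph.fromEdgeSet {s(v, w)}).Adj a c
    · exact hadj.reachable
    · simp only [sdiff_adj, fromEdgeSet_adj, Set.mem_singleton_iff, not_and, not_not, h,
        true_and, h.ne, ne_eq, not_false_eq_true, and_true, not_forall] at hadj
      rw [Sym2.eq_iff] at hadj
      rcases hadj with ⟨rfl, rfl⟩ | ⟨rfl, rfl⟩
      · exact hr
      · exact hr.symm

private lemma exists_tree {W : Type*} [Finite W] (G : SimpleGraph W) (h : G.Connected) :
    ∃ T : SimpleGraph W, T ≤ G ∧ T.IsTree := by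
  classical
  generalize hn : G.edgeSet.ncard = n
  induction n using Nat.strong_induction_on generalizing G with
  | _ n ih =>
  by_cases hac : G.IsAcyclic
  · exact ⟨G, le_refl _, ⟨h, hac⟩⟩
  · rw [isAcyclic_iff_forall_adj_isBridge] at hac
    push_neg at hac
    obtain ⟨v, w, hvw, hbr⟩ := hac
    rw [isBridge_iff] at hbr
    have hre : (G \ SimpleGraph.fromEdgeSet {s(v, w)}).Reachable v w := by
      by_contra hc; exact hbr hc
    set G' := G \ SimpleGraph.fromEdgeSet {s(v, w)} with hG'
    have hle : G' ≤ G := sdiff_le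
    have hconn' : G'.Connected := by
      rw [connected_iff] at h ⊢
      exact ⟨fun a b => reach_del hre (h.1 a b), h.2⟩
    have hes : G'.edgeSet = G.edgeSet \ {s(v, w)} := by
      rw [hG', edgeSet_sdiff, edgeSet_fromEdgeSet, edgeSet_sdiff_sdiff_isDiag]
    have hlt : G'.edgeSet.ncard < n := by
      rw [← hn, hes]
      apply Set.ncard_lt_ncard _ G.edgeSet.toFinite
      rw [ssubset_iff_subset_ne]
      refine ⟨Set.diff_subset, fun hEq => ?_⟩
      have hm : s(v, w) ∈ G.edgeSet := hvw
      rw [← hEq] at hm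
      exact hm.2 rfl
    obtain ⟨T, hT, hTt⟩ := ih _ hlt G' hconn' rfl
    exact ⟨T, hT.trans hle, hTt⟩

private lemma subgraph_of_tree {V : Type*} (G : SimpleGraph V) (H : G.Subgraph)
    {T : SimpleGraph H.verts} (hle : T ≤ H.coe) (hT : T.IsTree) :
    ∃ T' : G.Subgraph, T'.verts = H.verts ∧ T'.coe.IsTree := by
  classical
  let T' : G.Subgraph :=
    ⟨H.verts, fun a b => ∃ (ha : a ∈ H.verts) (hb : b ∈ H.verts), T.Adj ⟨a, ha⟩ ⟨b, hb⟩,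
      fun h => H.adj_sub (hle h.2.2), fun h => h.1, ⟨fun a b h => ⟨h.2.1, h.1, h.2.2.symm⟩⟩⟩
  have hEq : T'.coe = T := by
    ext x y
    exact ⟨fun ⟨ha, hb, h⟩ => h, fun h => ⟨x.2, y.2, h⟩⟩
  exact ⟨T', rfl, by rw [hEq]; exact hT⟩

private lemma grow {V : Type*} [Fintype V] (G : SimpleGraph V) (hconn : G.Connected)
    (D : Finset V) (hD : Dominating G ↑D) :
    ∀ n (H : G.Subgraph), (↑D \ H.verts).ncard = n →
      H.Connected → 1 ≤ (H.verts ∩ ↑D).ncard →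
      H.verts.ncard ≤ 3 * (H.verts ∩ ↑D).ncard - 2 →
      ∃ H' : G.Subgraph, H'.Connected ∧ ↑D ⊆ H'.verts ∧
        H'.verts.ncard ≤ 3 * D.card - 2 := by
  intro n
  induction n using Nat.strong_induction_on with
  | _ n ih =>
  intro H hn hHc h1 hcard
  by_cases hsub : (↑D : Set V) ⊆ H.verts
  · refine ⟨H, hHc, hsub, ?_⟩
    have hEq : H.verts ∩ ↑D = ↑D := by
      ext x
      exact ⟨fun h => h.2, fun h => ⟨hsub h, h⟩⟩
    rwa [hEq, Set.ncard_coe_finset] at hcard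
  · have hA : H.verts.Nonempty := hHc.nonempty
    set W : Finset V := H.verts.toFinset with hWdef
    have hWne : W.Nonempty := by rwa [hWdef, Set.toFinset_nonempty]
    set f : V → ℕ := fun v => W.inf' hWne (fun w => G.dist v w) with hf
    have hF : (D.filter (fun d => d ∉ H.verts)).Nonempty := by
      rw [Set.not_subset] at hsub
      obtain ⟨d, hd, hd2⟩ := hsub
      exact ⟨d, Finset.mem_filter.2 ⟨hd, hd2⟩⟩
    obtain ⟨u, huF, humin⟩ := Finset.exists_min_image _ f hF
    rw [Finset.mem_filter] at huF
    obtain ⟨huD, huA⟩ := huF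
    have hmin : ∀ d ∈ D, d ∉ H.verts → f u ≤ f d := fun d hd hd2 =>
      humin d (Finset.mem_filter.2 ⟨hd, hd2⟩)
    obtain ⟨w, hwW, hwdist⟩ := Finset.exists_mem_eq_inf' hWne (fun w => G.dist u w)
    have hwA : w ∈ H.verts := by rwa [hWdef, Set.mem_toFinset] at hwW
    have hfle : ∀ v x, x ∈ H.verts → f v ≤ G.dist v x := by
      intro v x hx
      exact Finset.inf'_le _ (by rwa [hWdef, Set.mem_toFinset])
    obtain ⟨p, hp⟩ := hconn.exists_walk_length_eq_dist u w
    have hfu : f u = p.length := by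
      show (W.inf' hWne fun w => G.dist u w) = p.length
      rw [hwdist]; exact hp.symm
    have hlen1 : 1 ≤ p.length := by
      rcases Nat.eq_zero_or_pos p.length with h0 | h
      · exfalso
        have huw : u = w := (SimpleGraph.Walk.eq_of_length_eq_zero h0)
        exact huA (huw ▸ hwA)
      · exact h
    have hlen3 : p.length ≤ 3 := by
      by_contra hgt
      push_neg at hgt
      cases p with
      | nil => simp at hgt
      | @cons _ x1 _ h₁ q =>
        cases q with
        | nil => simp at hgt
        | @cons _ x2 _ h₂ r =>
          simp only [Walk.length_cons] at hgt hfu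
          have h4 : 4 ≤ f u := by omega
          have hdux2 : G.dist u x2 ≤ 2 := by
            have := SimpleGraph.dist_le (Walk.cons h₁ (Walk.cons h₂ Walk.nil))
            simpa using this
          have hdx2w : G.dist x2 w ≤ r.length := SimpleGraph.dist_le r
          have hx2A : x2 ∉ H.verts := by
            intro hmem
            have := hfle u x2 hmem
            omega
          have hx2D : x2 ∉ (↑D : Set V) := by
            intro hmem
            have hm1 := hmin x2 (by simpa using hmem) hx2A
            have hm2 := hfle x2 w hwA
            omega
          obtain ⟨d0, hd0D, hd0adj⟩ := hD x2 hx2D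
          have hdd0x2 : G.dist d0 x2 ≤ 1 := by
            have := SimpleGraph.dist_le (Walk.cons hd0adj Walk.nil)
            simpa using this
          have hd0A : d0 ∉ H.verts := by
            intro hmem
            have ht := hconn.dist_triangle (u := u) (v := x2) (w := d0)
            have := hfle u d0 hmem
            have hcm : G.dist x2 d0 = G.dist d0 x2 := SimpleGraph.dist_comm
            omega
          have hm1 := hmin d0 (by simpa using hd0D) hd0A
          have hm2 := hfle d0 w hwA
          have ht := hconn.dist_triangle (u := d0) (v := x2) (w := w)
          omega
    -- build the extended subgraph
    set H2 := H ⊔ p.toSubgraph with hH2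
    have hwS : w ∈ p.toSubgraph.verts := p.end_mem_verts_toSubgraph
    have hH2c : H2.Connected := Subgraph.connected_sup hHc.preconnected p.toSubgraph_connected.preconnected ⟨w, hwA, hwS⟩
    have hverts : H2.verts = H.verts ∪ {v | v ∈ p.support} := by
      rw [hH2, Subgraph.verts_sup, p.verts_toSubgraph]
    have hAsub : H.verts ⊆ H2.verts := by
      rw [hverts]; exact Set.subset_union_left
    have hcard2 : H2.verts.ncard ≤ H.verts.ncard + 3 := by
      have hsub2 : H2.verts ⊆ H.verts ∪ ↑(p.support.toFinset.erase w) := by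
        rw [hverts]
        rintro x (hx | hx)
        · exact Or.inl hx
        · by_cases hxw : x = w
          · exact Or.inl (hxw ▸ hwA)
          · exact Or.inr (by simp only [Finset.coe_erase, Set.mem_diff, Finset.mem_coe,
              List.mem_toFinset, Set.mem_singleton_iff]; exact ⟨hx, hxw⟩)
      have herase : (p.support.toFinset.erase w).card ≤ 3 := by
        have hsupc : p.support.toFinset.card ≤ p.length + 1 := by
          calc p.support.toFinset.card ≤ p.support.length := p.support.toFinset_card_le
            _ = p.length + 1 := p.length_support
        have hwmem : w ∈ p.support.toFinset := by
          simp [Walk.end_mem_support]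
        have := Finset.card_erase_of_mem hwmem
        omega
      calc H2.verts.ncard ≤ (H.verts ∪ ↑(p.support.toFinset.erase w)).ncard :=
            Set.ncard_le_ncard hsub2 (Set.toFinite _)
        _ ≤ H.verts.ncard + (↑(p.support.toFinset.erase w) : Set V).ncard :=
            Set.ncard_union_le _ _
        _ ≤ H.verts.ncard + 3 := by rw [Set.ncard_coe_finset]; omega
    have huS : u ∈ H2.verts := by
      rw [hverts]; exact Or.inr p.start_mem_support
    have hcnt : (H.verts ∩ ↑D).ncard + 1 ≤ (H2.verts ∩ ↑D).ncard := by
      have hins : insert u (H.verts ∩ ↑D) ⊆ H2.verts ∩ ↑D := by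
        intro x hx
        rcases Set.mem_insert_iff.1 hx with rfl | hx
        · exact ⟨huS, by simpa using huD⟩
        · exact ⟨hAsub hx.1, hx.2⟩
      have hnotmem : u ∉ H.verts ∩ ↑D := fun hmem => huA hmem.1
      have := Set.ncard_insert_of_notMem hnotmem (Set.toFinite _)
      have hle := Set.ncard_le_ncard hins (Set.toFinite _)
      omega
    have hdec : (↑D \ H2.verts).ncard < n := by
      rw [← hn]
      apply Set.ncard_lt_ncard _ (Set.toFinite _)
      refine Set.ssubset_iff_subset_ne.2 ⟨?_, ?_⟩
      · rintro x ⟨hx1, hx2⟩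
        exact ⟨hx1, fun hmem => hx2 (hAsub hmem)⟩
      · intro hEq
        have hu1 : u ∈ (↑D \ H.verts : Set V) := ⟨by simpa using huD, huA⟩
        rw [← hEq] at hu1
        exact hu1.2 huS
    exact ih _ hdec H2 rfl hH2c (by omega) (by omega)

/-- A dominating tree: if `D` is a dominating set of size at least `2` with no edges
inside `D`, then `G` has a subtree containing `D` with at most `3|D| - 2` vertices. -/
theorem dominating_tree {V : Type*} [Fintype V] (G : SimpleGraph V)
    (hconn : G.Connected) (D : Finset V) (hD : Dominating G ↑D)
    (h2 : 2 ≤ D.card) (hDind : ∀ u ∈ D, ∀ v ∈ D, ¬ G.Adj u v) :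
    ∃ T : G.Subgraph, ↑D ⊆ T.verts ∧ T.coe.IsTree ∧
      T.verts.ncard ≤ 3 * D.card - 2 := by
  classical
  obtain ⟨u0, hu0⟩ := Finset.card_pos.1 (by omega : 0 < D.card)
  have hv : (G.singletonSubgraph u0).verts = {u0} := G.singletonSubgraph_verts u0
  have hint : (G.singletonSubgraph u0).verts ∩ ↑D = {u0} := by
    rw [hv]
    ext x
    simp only [Set.mem_inter_iff, Set.mem_singleton_iff, Finset.mem_coe]
    exact ⟨fun h => h.1, fun h => ⟨h, h ▸ hu0⟩⟩
  have h1 : 1 ≤ ((G.singletonSubgraph u0).verts ∩ ↑D).ncard := by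
    rw [hint, Set.ncard_singleton]
  have hc0 : (G.singletonSubgraph u0).verts.ncard ≤
      3 * ((G.singletonSubgraph u0).verts ∩ ↑D).ncard - 2 := by
    rw [hint, Set.ncard_singleton, hv, Set.ncard_singleton]
  obtain ⟨H, hHc, hHsub, hHcard⟩ := grow G hconn D hD _ (G.singletonSubgraph u0) rfl
    SimpleGraph.Subgraph.singletonSubgraph_connected h1 hc0
  obtain ⟨T, hTle, hTt⟩ := exists_tree H.coe hHc.coe
  obtain ⟨T', hT'v, hT't⟩ := subgraph_of_tree G H hTle hTt
  exact ⟨T', hT'v ▸ hHsub, hT't, hT'v ▸ hHcard⟩
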